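/- Let E be a countable set partitioned into pairwise disjoint subsets (E_k)_{k∈ℕ} with E = ⋃_k E_k, let ν : E → [0,∞) satisfy ∑_{x∈E} ν(x) ≤ 1, and let P : E×E → [0,∞) be symmetric with ∑_{y∈E} P(x,y) ≤ 1 for every x, and such that P(x,y) = 0 whenever x and y lie in different parts of the partition. For each k ∈ ℕ, let F_k ⊆ E_k, let δ_k ∈ [0,1] satisfy ν(E_k ∖ F_k) ≤ δ_k·ν(E_k), and let η_k ≥ 0 satisfy ∑_{y∈F_k} P(x,y) ≤ η_k for every x ∈ F_k. Then ∑_{x,y∈E} √(ν(x))·√(ν(y))·P(x,y) ≤ ∑_{k∈ℕ} ν(E_k)·(η_k + 2√(δ_k)). -/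

import Mathlib

open scoped ENNReal NNReal

lemma enn_amgm (a b : ℝ≥0∞) : a ^ (1/2:ℝ) * b ^ (1/2:ℝ) ≤ (a + b) / 2 := by
  have htop : (⊤ : ℝ≥0∞) / 2 = ⊤ := by simp [ENNReal.div_eq_top]
  rcases eq_or_ne a ⊤ with ha | ha
  · have : a + b = ⊤ := by simp [ha]
    simp [this, htop]
  · rcases eq_or_ne b ⊤ with hb | hb
    · have : a + b = ⊤ := by simp [hb]
      simp [this, htop]
    · lift a to ℝ≥0 using ha
      lift b to ℝ≥0 using hb
      rw [← ENNReal.coe_rpow_of_nonneg _ (by norm_num : (0:ℝ) ≤ 1/2),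
        ← ENNReal.coe_rpow_of_nonneg _ (by norm_num : (0:ℝ) ≤ 1/2), ← ENNReal.coe_mul]
      have h := NNReal.geom_mean_le_arith_mean2_weighted (w₁ := 1/2) (w₂ := 1/2) (p₁ := a)
        (p₂ := b) (by rw [← two_mul, one_div, mul_inv_cancel₀ (two_ne_zero)])
      calc ((a ^ (1/2:ℝ) * b ^ (1/2:ℝ) : ℝ≥0) : ℝ≥0∞) ≤ ((1/2 * a + 1/2 * b : ℝ≥0) : ℝ≥0∞) := by
            exact_mod_cast h
        _ = (↑a + ↑b) / 2 := by
            push_cast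
            rw [ENNReal.div_eq_inv_mul (a := ↑a + ↑b), mul_add]
            norm_num

lemma enn_amgm' (a b c : ℝ≥0∞) : 2 * (a ^ (1/2:ℝ) * b ^ (1/2:ℝ) * c) ≤ (a + b) * c := by
  calc 2 * (a ^ (1/2:ℝ) * b ^ (1/2:ℝ) * c) = (2 * (a ^ (1/2:ℝ) * b ^ (1/2:ℝ))) * c := by ring
    _ ≤ (2 * ((a + b)/2)) * c := by
        gcongr
        exact enn_amgm a b
    _ = (a + b) * c := by
        rw [mul_comm (2:ℝ≥0∞), ENNReal.div_mul_cancel (two_ne_zero) (ENNReal.ofNat_ne_top)]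

-- mixed bound
lemma mixed_bound {E : Type*} (S G : Set E) (hGS : G ⊆ S)
    (ν : E → ℝ≥0∞)
    (P : E → E → ℝ≥0∞) (hP_symm : ∀ x y, P x y = P y x) (hP_row : ∀ x, (∑' y, P x y) ≤ 1)
    (δ : ℝ≥0∞) (hδ1 : δ ≤ 1) (hδ : (∑' x : G, ν x) ≤ δ * ∑' x : S, ν x) :
    (∑' x : G, ∑' y : S, ν x ^ (1/2:ℝ) * ν y ^ (1/2:ℝ) * P x y)
      ≤ δ ^ (1/2:ℝ) * ∑' x : S, ν x := by
  rcases eq_or_ne δ 0 with hδ0 | hδ0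
  · have hG0 : (∑' x : G, ν x) = 0 := by
      refine le_antisymm ?_ (zero_le)
      simpa [hδ0] using hδ
    have hzero : ∀ x : G, ν (x : E) = 0 := by
      simpa using (ENNReal.tsum_eq_zero.mp hG0)
    have : (∑' x : G, ∑' y : S, ν x ^ (1/2:ℝ) * ν y ^ (1/2:ℝ) * P x y) = 0 := by
      rw [ENNReal.tsum_eq_zero]
      intro x
      rw [ENNReal.tsum_eq_zero]
      intro y
      rw [hzero x, ENNReal.zero_rpow_of_pos (by norm_num)]
      simp
    exact le_trans (le_of_eq this) (zero_le)
  · set t := δ ^ (1/2:ℝ) with ht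
    have hδtop : δ ≠ ⊤ := ne_top_of_le_ne_top ENNReal.one_ne_top hδ1
    have ht0 : t ≠ 0 := by
      simp [ht, ENNReal.rpow_eq_zero_iff, hδ0, hδtop]
    have ht1 : t ≤ 1 := ENNReal.rpow_le_one hδ1 (by norm_num)
    have httop : t ≠ ⊤ := ne_top_of_le_ne_top ENNReal.one_ne_top ht1
    have htt : t * t = δ := by
      rw [ht, ← ENNReal.rpow_add _ _ hδ0 hδtop]
      norm_num
    -- pointwise bound
    have hpt : ∀ x y : E, 2 * (ν x ^ (1/2:ℝ) * ν y ^ (1/2:ℝ) * P x y)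
        ≤ (ν x / t) * P x y + (t * ν y) * P x y := by
      intro x y
      have key : ν x ^ (1/2:ℝ) * ν y ^ (1/2:ℝ) = (ν x / t) ^ (1/2:ℝ) * (t * ν y) ^ (1/2:ℝ) := by
        rw [← ENNReal.mul_rpow_of_nonneg _ _ (by norm_num : (0:ℝ) ≤ 1/2),
          ← ENNReal.mul_rpow_of_nonneg _ _ (by norm_num : (0:ℝ) ≤ 1/2)]
        congr 1
        rw [← mul_assoc, ENNReal.div_mul_cancel ht0 httop]
      rw [key]
      calc 2 * ((ν x / t) ^ (1/2:ℝ) * (t * ν y) ^ (1/2:ℝ) * P x y)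
          ≤ (ν x / t + t * ν y) * P x y := enn_amgm' _ _ _
        _ = (ν x / t) * P x y + (t * ν y) * P x y := by ring
    -- column sums ≤ 1
    have hcol : ∀ y, (∑' x, P x y) ≤ 1 := by
      intro y
      calc (∑' x, P x y) = ∑' x, P y x := tsum_congr fun x => hP_symm x y
        _ ≤ 1 := hP_row y
    have hA : (∑' x : G, ∑' y : S, (ν x / t) * P x y) ≤ t * ∑' x : S, ν x := by
      calc (∑' x : G, ∑' y : S, (ν x / t) * P x y)
          = ∑' x : G, (ν x / t) * ∑' y : S, P x y := by
            exact tsum_congr fun x => ENNReal.tsum_mul_left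
        _ ≤ ∑' x : G, (ν x / t) * 1 := by
            gcongr with x
            calc (∑' y : S, P (x:E) y) ≤ ∑' y, P (x:E) y :=
                  ENNReal.tsum_comp_le_tsum_of_injective Subtype.val_injective _
              _ ≤ 1 := hP_row x
        _ = (∑' x : G, ν x) / t := by
            simp only [mul_one, div_eq_mul_inv]
            exact ENNReal.tsum_mul_right
        _ ≤ (δ * ∑' x : S, ν x) / t := by gcongr
        _ = t * ∑' x : S, ν x := by
            rw [div_eq_mul_inv, ← htt]
            calc t * t * (∑' x : S, ν x) * t⁻¹ = (t * t⁻¹) * (t * ∑' x : S, ν x) := by ring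
              _ = t * ∑' x : S, ν x := by rw [ENNReal.mul_inv_cancel ht0 httop, one_mul]
    have hB : (∑' x : G, ∑' y : S, (t * ν y) * P x y) ≤ t * ∑' x : S, ν x := by
      calc (∑' x : G, ∑' y : S, (t * ν y) * P x y)
          = ∑' y : S, ∑' x : G, (t * ν y) * P (x:E) y := ENNReal.tsum_comm
        _ = ∑' y : S, (t * ν y) * ∑' x : G, P (x:E) y := by
            exact tsum_congr fun y => ENNReal.tsum_mul_left
        _ ≤ ∑' y : S, (t * ν y) * 1 := by
            gcongr with y
            calc (∑' x : G, P (x:E) (y:E)) ≤ ∑' x, P x (y:E) :=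
                  ENNReal.tsum_comp_le_tsum_of_injective Subtype.val_injective _
              _ ≤ 1 := hcol y
        _ = t * ∑' y : S, ν y := by
            simp only [mul_one]
            exact ENNReal.tsum_mul_left
    have h2 : 2 * (∑' x : G, ∑' y : S, ν x ^ (1/2:ℝ) * ν y ^ (1/2:ℝ) * P x y)
        ≤ 2 * (t * ∑' x : S, ν x) := by
      calc 2 * (∑' x : G, ∑' y : S, ν x ^ (1/2:ℝ) * ν y ^ (1/2:ℝ) * P x y)
          = ∑' x : G, ∑' y : S, 2 * (ν x ^ (1/2:ℝ) * ν y ^ (1/2:ℝ) * P x y) := by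
            rw [← ENNReal.tsum_mul_left]
            exact tsum_congr fun x => by rw [← ENNReal.tsum_mul_left]
        _ ≤ ∑' x : G, ∑' y : S, ((ν x / t) * P x y + (t * ν y) * P x y) := by
            gcongr with x y
            exact hpt x y
        _ = (∑' x : G, ∑' y : S, (ν x / t) * P x y)
            + ∑' x : G, ∑' y : S, (t * ν y) * P x y := by
            rw [← ENNReal.tsum_add]
            exact tsum_congr fun x => ENNReal.tsum_add
        _ ≤ t * (∑' x : S, ν x) + t * (∑' x : S, ν x) := add_le_add hA hB
        _ = 2 * (t * ∑' x : S, ν x) := by ring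
    exact (ENNReal.mul_le_mul_iff_right (two_ne_zero) ENNReal.ofNat_ne_top).mp h2

lemma block_bound {E : Type*} (S F : Set E) (hFS : F ⊆ S)
    (ν : E → ℝ≥0∞)
    (P : E → E → ℝ≥0∞) (hP_symm : ∀ x y, P x y = P y x) (hP_row : ∀ x, (∑' y, P x y) ≤ 1)
    (δ : ℝ≥0∞) (hδ1 : δ ≤ 1) (hδ : (∑' x : ↥(S \ F), ν x) ≤ δ * ∑' x : S, ν x)
    (η : ℝ≥0∞) (hη : ∀ x ∈ F, (∑' y : F, P x y) ≤ η) :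
    (∑' x : S, ∑' y : S, ν x ^ (1/2:ℝ) * ν y ^ (1/2:ℝ) * P x y)
      ≤ (∑' x : S, ν x) * (η + 2 * δ ^ (1/2:ℝ)) := by
  set G := S \ F with hG
  set t := δ ^ (1/2:ℝ) with ht
  set f : E → E → ℝ≥0∞ := fun x y => ν x ^ (1/2:ℝ) * ν y ^ (1/2:ℝ) * P x y with hf
  have hdisjFG : Disjoint F G := disjoint_sdiff_self_right
  have hFG : F ∪ G = S := Set.union_diff_cancel hFS
  have split : ∀ g : E → ℝ≥0∞, (∑' x : S, g x) = (∑' x : F, g x) + (∑' x : G, g x) := by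
    intro g
    rw [← Summable.tsum_union_disjoint (f := g) hdisjFG ENNReal.summable ENNReal.summable]
    exact (tsum_congr_set_coe g hFG).symm
  have hsymm_f : ∀ x y, f x y = f y x := by
    intro x y
    simp only [hf]
    rw [hP_symm x y]; ring
  have hM : (∑' x : G, ∑' y : S, f x y) ≤ t * ∑' x : S, ν x :=
    mixed_bound S G (Set.diff_subset) ν P hP_symm hP_row δ hδ1 hδ
  have hFG_le : (∑' x : F, ∑' y : G, f x y) ≤ t * ∑' x : S, ν x := by
    calc (∑' x : F, ∑' y : G, f x y) ≤ ∑' x : S, ∑' y : G, f x y :=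
          ENNReal.tsum_mono_subtype (fun x => ∑' y : G, f x y) hFS
      _ = ∑' y : G, ∑' x : S, f x y := ENNReal.tsum_comm
      _ = ∑' y : G, ∑' x : S, f y x := by
          exact tsum_congr fun y => tsum_congr fun x => (hsymm_f x y)
      _ ≤ t * ∑' x : S, ν x := hM
  have hνFS : (∑' x : F, ν x) ≤ ∑' x : S, ν x := ENNReal.tsum_mono_subtype ν hFS
  have hFF : (∑' x : F, ∑' y : F, f x y) ≤ η * ∑' x : S, ν x := by
    have h2 : 2 * (∑' x : F, ∑' y : F, f x y) ≤ 2 * (η * ∑' x : F, ν x) := by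
      calc 2 * (∑' x : F, ∑' y : F, f x y)
          = ∑' x : F, ∑' y : F, 2 * f x y := by
            rw [← ENNReal.tsum_mul_left]
            exact tsum_congr fun x => by rw [← ENNReal.tsum_mul_left]
        _ ≤ ∑' x : F, ∑' y : F, (ν x * P x y + ν y * P x y) := by
            gcongr with x y
            calc 2 * f x y ≤ (ν x + ν y) * P (x:E) (y:E) := enn_amgm' _ _ _
              _ = ν x * P x y + ν y * P x y := by ring
        _ = (∑' x : F, ∑' y : F, ν x * P x y) + ∑' x : F, ∑' y : F, ν y * P x y := by
            rw [← ENNReal.tsum_add]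
            exact tsum_congr fun x => ENNReal.tsum_add
        _ ≤ η * (∑' x : F, ν x) + η * (∑' x : F, ν x) := by
            have h1 : (∑' x : F, ∑' y : F, ν x * P x y) ≤ η * ∑' x : F, ν x := by
              calc (∑' x : F, ∑' y : F, ν (x:E) * P x y)
                  = ∑' x : F, ν (x:E) * ∑' y : F, P x y :=
                    tsum_congr fun x => ENNReal.tsum_mul_left
                _ ≤ ∑' x : F, ν (x:E) * η := by
                    gcongr with x
                    exact hη x x.2
                _ = η * ∑' x : F, ν x := by
                    rw [ENNReal.tsum_mul_right]; ring
            have h2 : (∑' x : F, ∑' y : F, ν (y:E) * P x y) ≤ η * ∑' x : F, ν x := by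
              calc (∑' x : F, ∑' y : F, ν (y:E) * P x y)
                  = ∑' y : F, ∑' x : F, ν (y:E) * P (x:E) (y:E) := ENNReal.tsum_comm
                _ = ∑' y : F, ν (y:E) * ∑' x : F, P (y:E) (x:E) := by
                    refine tsum_congr fun y => ?_
                    rw [ENNReal.tsum_mul_left]
                    congr 1
                    exact tsum_congr fun x => by rw [hP_symm]
                _ ≤ ∑' y : F, ν (y:E) * η := by
                    gcongr with y
                    exact hη y y.2
                _ = η * ∑' x : F, ν x := by
                    rw [ENNReal.tsum_mul_right]; ring
            exact add_le_add h1 h2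
        _ = 2 * (η * ∑' x : F, ν x) := by ring
    have := (ENNReal.mul_le_mul_iff_right (two_ne_zero) ENNReal.ofNat_ne_top).mp h2
    calc (∑' x : F, ∑' y : F, f x y) ≤ η * ∑' x : F, ν x := this
      _ ≤ η * ∑' x : S, ν x := by gcongr
  calc (∑' x : S, ∑' y : S, f x y)
      = (∑' x : F, ∑' y : S, f x y) + ∑' x : G, ∑' y : S, f x y :=
        split (fun x => ∑' y : S, f x y)
    _ = ((∑' x : F, ∑' y : F, f x y) + ∑' x : F, ∑' y : G, f x y)
        + ∑' x : G, ∑' y : S, f x y := by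
        congr 1
        rw [← ENNReal.tsum_add]
        exact tsum_congr fun x => split (fun y => f x y)
    _ ≤ (η * (∑' x : S, ν x) + t * (∑' x : S, ν x)) + t * (∑' x : S, ν x) :=
        add_le_add (add_le_add hFF hFG_le) hM
    _ = (∑' x : S, ν x) * (η + 2 * t) := by ring



/-- **Lemma (singularity bound, partitioned form).**
Let `E` be a countable set partitioned into pairwise disjoint subsets `(E_k)_{k∈ℕ}`,
let `ν` be a sub-probability measure on `E` and let `P` be a symmetric sub-transition
matrix on `E` vanishing off the diagonal blocks of the partition.  For each `k`, let
`F_k ⊆ E_k`, let `δ_k ∈ [0,1]` satisfy `ν(E_k \ F_k) ≤ δ_k·ν(E_k)`, and let `η_k`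
bound `∑_{y∈F_k} P(x,y)` for every `x ∈ F_k`.  Then
`∑_{x,y∈E} √(ν(x))·√(ν(y))·P(x,y) ≤ ∑_k ν(E_k)·(η_k + 2√(δ_k))`.
(All series have nonnegative terms and are interpreted in `[0,∞]`.) -/
theorem singularity_bound_partitioned {E : Type*} [Countable E]
    (Epart : ℕ → Set E) (hdisj : Pairwise (Function.onFun Disjoint Epart))
    (hcover : (⋃ k, Epart k) = Set.univ)
    (ν : E → ℝ≥0∞) (hν_le : (∑' x, ν x) ≤ 1)
    (P : E → E → ℝ≥0∞) (hP_symm : ∀ x y, P x y = P y x) (hP_row : ∀ x, (∑' y, P x y) ≤ 1)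
    (hP_offblock : ∀ k l : ℕ, k ≠ l → ∀ x ∈ Epart k, ∀ y ∈ Epart l, P x y = 0)
    (F : ℕ → Set E) (hF : ∀ k, F k ⊆ Epart k)
    (δ : ℕ → ℝ≥0∞) (hδ_le : ∀ k, δ k ≤ 1)
    (hδ : ∀ k, (∑' x : ↥(Epart k \ F k), ν x) ≤ δ k * ∑' x : ↥(Epart k), ν x)
    (η : ℕ → ℝ≥0∞) (hη : ∀ k, ∀ x ∈ F k, (∑' y : ↥(F k), P x y) ≤ η k) :
    (∑' x, ∑' y, ν x ^ (1 / 2 : ℝ) * ν y ^ (1 / 2 : ℝ) * P x y)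
      ≤ ∑' k : ℕ, (∑' x : ↥(Epart k), ν x) * (η k + 2 * δ k ^ (1 / 2 : ℝ)) := by
  set f : E → E → ℝ≥0∞ := fun x y => ν x ^ (1 / 2 : ℝ) * ν y ^ (1 / 2 : ℝ) * P x y with hf
  have hmem : ∀ x : E, ∃ k, x ∈ Epart k := by
    intro x
    have : x ∈ ⋃ k, Epart k := hcover ▸ Set.mem_univ x
    simpa using this
  have hinner : ∀ (k : ℕ) (x : E), x ∈ Epart k → (∑' y, f x y) = ∑' y : ↥(Epart k), f x y := by
    intro k x hx
    refine (tsum_subtype_eq_of_support_subset ?_).symm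
    intro y hy
    by_contra hyk
    obtain ⟨l, hl⟩ := hmem y
    have hkl : k ≠ l := fun h => hyk (h ▸ hl)
    have : P x y = 0 := hP_offblock k l hkl x hx y hl
    apply hy
    simp [hf, this]
  let e : (Σ k, ↥(Epart k)) ≃ E :=
    (Set.unionEqSigmaOfDisjoint hdisj).symm.trans
      ((Equiv.setCongr hcover).trans (Equiv.Set.univ E))
  have he : ∀ p : Σ k, ↥(Epart k), e p = (p.2 : E) := fun p => rfl
  have hstep : (∑' x, ∑' y, f x y) = ∑' k : ℕ, ∑' x : ↥(Epart k), ∑' y, f x y := by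
    rw [← Equiv.tsum_eq e (fun x => ∑' y, f x y), ENNReal.tsum_sigma']
    exact tsum_congr fun k => tsum_congr fun x => by rw [he ⟨k, x⟩]
  calc (∑' x, ∑' y, f x y)
      = ∑' k : ℕ, ∑' x : ↥(Epart k), ∑' y, f (x : E) y := hstep
    _ = ∑' k : ℕ, ∑' x : ↥(Epart k), ∑' y : ↥(Epart k), f (x : E) (y : E) := by
        exact tsum_congr fun k => tsum_congr fun x => hinner k x x.2
    _ ≤ ∑' k : ℕ, (∑' x : ↥(Epart k), ν x) * (η k + 2 * δ k ^ (1 / 2 : ℝ)) := by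
        refine ENNReal.tsum_le_tsum fun k => ?_
        exact block_bound (Epart k) (F k) (hF k) ν P hP_symm hP_row (δ k) (hδ_le k) (hδ k)
          (η k) (hη k)
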